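/- Let V and W be dense subsets of the Euclidean plane and let f : V → W be a bijective step-isometry at level (1, 1). Define the discrepancy of x, y ∈ V as D(x,y) = |d(x,y) − d(f(x), f(y))|. For every ε > 0, if there exist points x₁, x₂ ∈ V with D(x₁,x₂) = ε, then there exist points x₃, x₄ ∈ V with D(x₃,x₄) ≥ (3/4)·ε and d(x₃,x₄) > 40. -/

import Mathlib

open MeasureTheory Metric

/-- Pairs of distinct points of `V` at distance less than `δ`: potential edges. -/
def LargEdges {S : Type*} [MetricSpace S] (V : Set S) (δ : ℝ) : Set (Sym2 V) :=
  {e | ¬ e.IsDiag ∧ ∀ u v : V, e = s(u, v) → dist (u : S) (v : S) < δ}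

/-- The graph on `V` determined by a sample `ω` of the LARG model. -/
def largGraph {S : Type*} [MetricSpace S] (V : Set S) (δ : ℝ)
    (ω : LargEdges V δ → Bool) : SimpleGraph V where
  Adj u v := ∃ h : s(u, v) ∈ LargEdges V δ, ω ⟨s(u, v), h⟩ = true
  symm := by
    constructor
    intro u v h
    rwa [Sym2.eq_swap]
  loopless := by
    constructor
    rintro u ⟨h, -⟩
    exact h.1 (by simp)

/-- `G` is geometrically existentially closed at level `δ`. -/
def IsGEC {S : Type*} [MetricSpace S] {V : Set S} (G : SimpleGraph V) (δ : ℝ) : Prop :=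
  ∀ δ' : ℝ, 0 < δ' → δ' < δ → ∀ x : V, ∀ A B : Finset V,
    Disjoint A B → x ∉ A → x ∉ B →
    (∀ u : V, u ∈ A ∨ u ∈ B → dist (u : S) (x : S) < δ) →
    ∃ z : V, z ∉ A ∧ z ∉ B ∧ z ≠ x ∧
      (∀ a ∈ A, G.Adj z a) ∧ (∀ b ∈ B, ¬ G.Adj z b) ∧
      (∀ u : V, u ∈ A ∨ u ∈ B → dist (u : S) (z : S) < δ) ∧ dist (x : S) (z : S) < δ'

/-- `G` has threshold `δ`: adjacent vertices are at distance less than `δ`. -/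
def HasThreshold {S : Type*} [MetricSpace S] {V : Set S} (G : SimpleGraph V) (δ : ℝ) : Prop :=
  ∀ u v : V, G.Adj u v → dist (u : S) (v : S) < δ

/-- A geometric `δ`-graph: `δ`-g.e.c. with threshold `δ`. -/
def IsGeometricGraph {S : Type*} [MetricSpace S] {V : Set S} (G : SimpleGraph V) (δ : ℝ) : Prop :=
  IsGEC G δ ∧ HasThreshold G δ

/-- A set is dense in itself. -/
def DenseInItself {S : Type*} [MetricSpace S] (V : Set S) : Prop :=
  ∀ x ∈ V, ∀ ε : ℝ, 0 < ε → ∃ y ∈ V, y ≠ x ∧ dist y x < ε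

/-- A graph is existentially closed. -/
def IsEC {α : Type*} (G : SimpleGraph α) : Prop :=
  ∀ A B : Finset α, Disjoint A B →
    ∃ z : α, z ∉ A ∧ z ∉ B ∧ (∀ a ∈ A, G.Adj z a) ∧ (∀ b ∈ B, ¬ G.Adj z b)

/-- A metrically convex set. -/
def MetricConvex {S : Type*} [MetricSpace S] (C : Set S) : Prop :=
  ∀ x ∈ C, ∀ y ∈ C, ∃ z ∈ C, dist x z + dist z y = dist x y

/-- `f : V → W` is a step-isometry at level `(δ, γ)`. -/
def IsStepIsometry {S T : Type*} [MetricSpace S] [MetricSpace T]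
    {V : Set S} {W : Set T} (f : V → W) (δ γ : ℝ) : Prop :=
  Function.Surjective f ∧
    ∀ u v : V, ⌊dist (u : S) (v : S) / δ⌋ = ⌊dist ((f u : T)) ((f v : T)) / γ⌋

/-- Quotient of `v` w.r.t. offset `δ` and anchor `v₀`. -/
noncomputable def quot' (δ v₀ v : ℝ) : ℤ := ⌊(v - v₀) / δ⌋

/-- Representative of `v` w.r.t. offset `δ` and anchor `v₀`. -/
noncomputable def repr' (δ v₀ v : ℝ) : ℝ := v - v₀ - δ * ⌊(v - v₀) / δ⌋

private lemma exists_far_point {E : Type*} [NormedAddCommGroup E] [NormedSpace ℝ E]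
    (p q : E) (hpq : p ≠ q) (r : ℝ) (hr : 0 ≤ r) :
    ∃ t : E, dist q t = r ∧ dist p t = dist p q + r := by
  have hqp : q - p ≠ 0 := sub_ne_zero.mpr (Ne.symm hpq)
  have hnorm : (0:ℝ) < ‖q - p‖ := norm_pos_iff.mpr hqp
  set c : ℝ := r / ‖q - p‖ with hc
  have hc0 : 0 ≤ c := div_nonneg hr hnorm.le
  refine ⟨q + c • (q - p), ?_, ?_⟩
  · rw [dist_eq_norm]
    have : q - (q + c • (q - p)) = -(c • (q - p)) := by abel
    rw [this, norm_neg, norm_smul, Real.norm_eq_abs, abs_of_nonneg hc0, hc,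
      div_mul_cancel₀ _ hnorm.ne']
  · rw [dist_eq_norm, dist_eq_norm]
    have h1 : p - (q + c • (q - p)) = -((1 + c) • (q - p)) := by
      rw [add_smul, one_smul]; abel
    rw [h1, norm_neg, norm_smul, Real.norm_eq_abs, abs_of_nonneg (by linarith), ← norm_neg (p - q)]
    have : -(p - q) = q - p := by abel
    rw [this, add_mul, one_mul, hc, div_mul_cancel₀ _ hnorm.ne', add_comm]

private lemma floor_abs_lt_one {a b : ℝ} (h : ⌊a⌋ = ⌊b⌋) : |a - b| < 1 := by
  have h' : ((⌊a⌋ : ℤ) : ℝ) = ((⌊b⌋ : ℤ) : ℝ) := by exact_mod_cast h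
  have := Int.floor_le a
  have := Int.floor_le b
  have := Int.lt_floor_add_one a
  have := Int.lt_floor_add_one b
  rw [abs_sub_lt_iff]
  constructor <;> linarith

private abbrev Pl := EuclideanSpace ℝ (Fin 2)

private lemma key_spread {V W : Set Pl}
    (hV : Dense V) (f : V → W)
    (hstep : ∀ u v : V, ⌊dist (u : Pl) (v : Pl)⌋ = ⌊dist ((f u : Pl)) ((f v : Pl))⌋)
    (ε : ℝ) (hε : 0 < ε) (hε1 : ε < 1) (x₁ x₂ : V)
    (h : dist (x₁ : Pl) (x₂ : Pl) - dist ((f x₁ : Pl)) ((f x₂ : Pl)) = ε) :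
    ∃ x₃ x₄ : V,
      dist (x₃ : Pl) (x₄ : Pl) - dist ((f x₃ : Pl)) ((f x₄ : Pl)) ≥ 3/4 * ε ∧
      dist (x₃ : Pl) (x₄ : Pl) > 42 := by
  have hd' : (0:ℝ) ≤ dist ((f x₁ : Pl)) ((f x₂ : Pl)) := dist_nonneg
  have hpq : (x₁ : Pl) ≠ (x₂ : Pl) := by
    intro hEq
    rw [hEq, dist_self] at h
    linarith
  obtain ⟨t, ht1, ht2⟩ := exists_far_point (x₁ : Pl) (x₂ : Pl) hpq (43 - ε/12) (by linarith)
  obtain ⟨z, hzV, hzt⟩ := hV.exists_dist_lt t (show (0:ℝ) < ε/24 by linarith)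
  refine ⟨x₁, ⟨z, hzV⟩, ?_, ?_⟩ <;>
  · set z' : V := ⟨z, hzV⟩ with hz'def
    have hz : dist t (z' : Pl) < ε/24 := hzt
    have hqz_ub : dist (x₂ : Pl) (z' : Pl) < 43 - ε/12 + ε/24 := by
      calc dist (x₂ : Pl) (z' : Pl) ≤ dist (x₂ : Pl) t + dist t (z' : Pl) := dist_triangle _ _ _
      _ < 43 - ε/12 + ε/24 := by rw [ht1]; linarith
    have hqz_lb : dist (x₂ : Pl) (z' : Pl) > 43 - ε/12 - ε/24 := by
      have h2 := dist_triangle (x₂ : Pl) (z' : Pl) t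
      rw [dist_comm (z' : Pl) t] at h2
      linarith [ht1 ▸ h2]
    have hfloor : ⌊dist (x₂ : Pl) (z' : Pl)⌋ = 42 := by
      rw [Int.floor_eq_iff] <;> constructor <;> push_cast <;> linarith
    have hfloor' : ⌊dist ((f x₂ : Pl)) ((f z' : Pl))⌋ = 42 := by
      rw [← hstep x₂ z', hfloor]
    have hd2'_ub : dist ((f x₂ : Pl)) ((f z' : Pl)) < 43 := by
      have h3 := Int.lt_floor_add_one (dist ((f x₂ : Pl)) ((f z' : Pl)))
      rw [hfloor'] at h3; push_cast at h3; linarith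
    have hpz_lb : dist (x₁ : Pl) (z' : Pl) >
        dist (x₁ : Pl) (x₂ : Pl) + 43 - ε/12 - ε/24 := by
      have h2 := dist_triangle (x₁ : Pl) (z' : Pl) t
      rw [dist_comm (z' : Pl) t] at h2
      linarith [ht2 ▸ h2]
    have himg : dist ((f x₁ : Pl)) ((f z' : Pl)) ≤
        dist ((f x₁ : Pl)) ((f x₂ : Pl)) + dist ((f x₂ : Pl)) ((f z' : Pl)) := dist_triangle _ _ _
    have hq0 : (0:ℝ) ≤ dist (x₁ : Pl) (x₂ : Pl) := dist_nonneg
    first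
    | linarith
    | nlinarith
theorem discrepancy_spreads (V W : Set (EuclideanSpace ℝ (Fin 2)))
    (hV : Dense V) (hW : Dense W) (f : V → W) (hf : Function.Bijective f)
    (hstep : ∀ u v : V, ⌊dist (u : EuclideanSpace ℝ (Fin 2)) (v : EuclideanSpace ℝ (Fin 2)) / 1⌋ =
      ⌊dist ((f u : EuclideanSpace ℝ (Fin 2))) ((f v : EuclideanSpace ℝ (Fin 2))) / 1⌋)
    (ε : ℝ) (hε : 0 < ε) (x₁ x₂ : V)
    (hD : |dist (x₁ : EuclideanSpace ℝ (Fin 2)) (x₂ : EuclideanSpace ℝ (Fin 2)) -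
      dist ((f x₁ : EuclideanSpace ℝ (Fin 2))) ((f x₂ : EuclideanSpace ℝ (Fin 2)))| = ε) :
    ∃ x₃ x₄ : V, |dist (x₃ : EuclideanSpace ℝ (Fin 2)) (x₄ : EuclideanSpace ℝ (Fin 2)) -
      dist ((f x₃ : EuclideanSpace ℝ (Fin 2))) ((f x₄ : EuclideanSpace ℝ (Fin 2)))| ≥ (3 / 4) * ε ∧
      dist (x₃ : EuclideanSpace ℝ (Fin 2)) (x₄ : EuclideanSpace ℝ (Fin 2)) > 40 := by
  have hstep' : ∀ u v : V, ⌊dist (u : Pl) (v : Pl)⌋ = ⌊dist ((f u : Pl)) ((f v : Pl))⌋ := by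
    intro u v
    simpa [div_one] using hstep u v
  have hε1 : ε < 1 := by
    rw [← hD]; exact floor_abs_lt_one (hstep' x₁ x₂)
  rcases (abs_eq hε.le).mp hD with hcase | hcase
  · obtain ⟨x₃, x₄, h1, h2⟩ := key_spread hV f hstep' ε hε hε1 x₁ x₂ hcase
    exact ⟨x₃, x₄, le_trans h1 (le_abs_self _), by linarith⟩
  · set e : V ≃ W := Equiv.ofBijective f hf with hedef
    have hfe : ∀ x : V, f x = e x := fun x => rfl
    have hgf : ∀ x : V, e.symm (f x) = x := by
      intro x; rw [hfe]; exact e.symm_apply_apply x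
    have hfg : ∀ y : W, f (e.symm y) = y := by
      intro y; rw [hfe]; exact e.apply_symm_apply y
    have hgstep : ∀ u v : W, ⌊dist (u : Pl) (v : Pl)⌋ =
        ⌊dist ((e.symm u : Pl)) ((e.symm v : Pl))⌋ := by
      intro u v
      have := hstep' (e.symm u) (e.symm v)
      rw [hfg, hfg] at this
      exact this.symm
    have hpair : dist ((f x₁ : Pl)) ((f x₂ : Pl)) -
        dist ((e.symm (f x₁) : Pl)) ((e.symm (f x₂) : Pl)) = ε := by
      rw [hgf, hgf]; linarith
    obtain ⟨y₃, y₄, h1, h2⟩ := key_spread hW e.symm hgstep ε hε hε1 (f x₁) (f x₂) hpair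
    refine ⟨e.symm y₃, e.symm y₄, ?_, ?_⟩
    · rw [hfg, hfg, abs_sub_comm]
      exact le_trans h1 (le_abs_self _)
    · have hfl : (42 : ℤ) ≤ ⌊dist (y₃ : Pl) (y₄ : Pl)⌋ := by
        rw [Int.le_floor]; exact_mod_cast h2.le
      have := hgstep y₃ y₄
      have hfl2 : (42 : ℤ) ≤ ⌊dist ((e.symm y₃ : Pl)) ((e.symm y₄ : Pl))⌋ := this ▸ hfl
      have h3 : ((42 : ℤ) : ℝ) ≤ dist ((e.symm y₃ : Pl)) ((e.symm y₄ : Pl)) :=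
        le_trans (by exact_mod_cast hfl2) (Int.floor_le _)
      push_cast at h3
      linarith
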